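/- Let A be a C*-algebra and a, b ∈ A positive. Then a is Cuntz below b (a ≾ b, i.e., there exist d_n with d_n* b d_n → a in norm) if and only if for each ε > 0 there exists x ∈ A such that (a − ε)₊ = x*x and xx* belongs to the hereditary subalgebra generated by b. -/

import Mathlib

open Filter Topology

variable {A : Type*} [NonUnitalCStarAlgebra A] [PartialOrder A] [StarOrderedRing A]

/-- Cuntz subequivalence: `a ≾ b` iff `dₙ* b dₙ → a` in norm for some sequence `dₙ`. -/
def CuntzLE (a b : A) : Prop :=
  ∃ d : ℕ → A, Tendsto (fun n => star (d n) * b * (d n)) atTop (nhds a)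

/-- The hereditary subalgebra generated by `b`, i.e. the closure of `bAb`. -/
def her (b : A) : Set A := closure {x | ∃ y : A, x = b * y * b}

set_option linter.unusedSectionVars false
set_option linter.unusedVariables false

section Scalar

open Real

/-- `max (t-ε) 0 * t = max (t-ε) 0 ^2 + ε * max (t-ε) 0` -/
lemma sc_F_mul_id (ε t : ℝ) (hε : 0 ≤ ε) :
    max (t - ε) 0 * t = max (t - ε) 0 * max (t - ε) 0 + ε * max (t - ε) 0 := by
  rcases le_total (t - ε) 0 with h | h
  · rw [max_eq_right h]; ring
  · rw [max_eq_left h]; ring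

lemma sc_dist_F (ε t : ℝ) (hε : 0 ≤ ε) (ht : 0 ≤ t) : |t - max (t - ε) 0| ≤ ε := by
  rcases le_total (t - ε) 0 with h | h
  · rw [max_eq_right h, sub_zero, abs_of_nonneg ht]; linarith
  · rw [max_eq_left h]; simp [abs_of_nonneg hε]

lemma sc_sqrt_aux (t s : ℝ) (ht : 0 ≤ t) (hs : 0 < s) :
    |t * (Real.sqrt t * (t + s)⁻¹) - Real.sqrt t| ≤ Real.sqrt s := by
  have hts : 0 < t + s := by linarith
  have h1 : t * (Real.sqrt t * (t + s)⁻¹) - Real.sqrt t = - (Real.sqrt t * s * (t+s)⁻¹) := by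
    field_simp; ring
  rw [h1, abs_neg, abs_of_nonneg (by positivity)]
  rw [mul_inv_le_iff₀ hts]
  -- √t * s ≤ √s * (t+s) ; use AM-GM : 2 √t √s ≤ t + s
  have h2 : 2 * (Real.sqrt t * Real.sqrt s) ≤ t + s := by
    nlinarith [sq_nonneg (Real.sqrt t - Real.sqrt s), Real.sq_sqrt ht, Real.sq_sqrt hs.le]
  have h3 : Real.sqrt t * s = (Real.sqrt t * Real.sqrt s) * Real.sqrt s := by
    rw [mul_assoc, Real.mul_self_sqrt hs.le]
  rw [h3]
  nlinarith [Real.sqrt_nonneg s, Real.sqrt_nonneg t, Real.sq_sqrt hs.le,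
    mul_le_mul_of_nonneg_right h2 (Real.sqrt_nonneg s)]

end Scalar

section Her

variable (b : A)

lemma her_isClosed : IsClosed (her b) := isClosed_closure

lemma sandwich_mem_her (u : A) : b * u * b ∈ her b := subset_closure ⟨u, rfl⟩

lemma her_conj {y : A} (hy : y ∈ her b) (c : A) : y * c * y ∈ her b := by
  obtain ⟨f, hfD, hf⟩ := mem_closure_iff_seq_limit.mp hy
  have : Tendsto (fun n => f n * c * f n) atTop (𝓝 (y * c * y)) :=
    (hf.mul tendsto_const_nhds).mul hf
  refine mem_closure_of_tendsto this (Eventually.of_forall fun n => ?_)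
  obtain ⟨u, hu⟩ := hfD n
  exact ⟨u * b * c * (b * u), by rw [hu]; simp [mul_assoc]⟩

end Her

section Helpers

local notation "σₙ" => quasispectrum

lemma cfcₙ_mul' (f g : ℝ → ℝ) (a : A)
    (hf : ContinuousOn f (σₙ ℝ a)) (hf0 : f 0 = 0)
    (hg : ContinuousOn g (σₙ ℝ a)) (hg0 : g 0 = 0) (ha : IsSelfAdjoint a) :
    cfcₙ f a * cfcₙ g a = cfcₙ (fun t => f t * g t) a :=
  (cfcₙ_mul f g a hf hf0 hg hg0).symm

lemma cfcₙ_mul_id (f : ℝ → ℝ) (a : A)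
    (hf : ContinuousOn f (σₙ ℝ a)) (hf0 : f 0 = 0) (ha : IsSelfAdjoint a) :
    cfcₙ f a * a = cfcₙ (fun t => f t * t) a := by
  calc cfcₙ f a * a = cfcₙ f a * cfcₙ (fun t : ℝ => t) a := by rw [cfcₙ_id' ℝ a]
    _ = _ := cfcₙ_mul' f (fun t => t) a hf hf0 continuousOn_id rfl ha

lemma id_mul_cfcₙ (f : ℝ → ℝ) (a : A)
    (hf : ContinuousOn f (σₙ ℝ a)) (hf0 : f 0 = 0) (ha : IsSelfAdjoint a) :
    a * cfcₙ f a = cfcₙ (fun t => t * f t) a := by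
  calc a * cfcₙ f a = cfcₙ (fun t : ℝ => t) a * cfcₙ f a := by rw [cfcₙ_id' ℝ a]
    _ = _ := cfcₙ_mul' (fun t => t) f a continuousOn_id rfl hf hf0 ha

end Helpers
section Her2

local notation "σₙ" => quasispectrum

lemma sc_sqrt_quad (t μ : ℝ) (ht : 0 ≤ t) (hμ : 0 < μ) :
    |Real.sqrt t - t * (Real.sqrt t * μ^4 * ((1+μ^2*t)⁻¹)^2) * t| ≤ 1/μ := by
  have hd : 0 < 1 + μ^2*t := by positivity
  have hs := Real.sqrt_nonneg t
  have h1 : t * (Real.sqrt t * μ^4 * ((1+μ^2*t)⁻¹)^2) * t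
      = Real.sqrt t * (μ^2*t)^2 / (1+μ^2*t)^2 := by
    field_simp
  have h2 : Real.sqrt t - Real.sqrt t * (μ^2*t)^2/(1+μ^2*t)^2
      = Real.sqrt t * (1 + 2*(μ^2*t)) / (1+μ^2*t)^2 := by
    field_simp; ring
  rw [h1, h2, abs_of_nonneg (by positivity), div_le_iff₀ (by positivity)]
  set v := μ * Real.sqrt t with hvdef
  have hv2 : v^2 = μ^2 * t := by rw [hvdef, mul_pow, Real.sq_sqrt ht]
  have hvnn : 0 ≤ v := by positivity
  have hgoal : Real.sqrt t * (1 + 2*(μ^2*t)) * μ = v * (1 + 2*v^2) := by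
    rw [hv2]; rw [hvdef]; ring
  have h3 : v * (1+2*v^2) ≤ (1+v^2)^2 := by
    nlinarith [sq_nonneg (v*(v-1)), sq_nonneg (2*v-1), sq_nonneg v]
  calc Real.sqrt t * (1 + 2*(μ^2*t)) = (v * (1+2*v^2))/μ := by
        rw [← hgoal]; field_simp
    _ ≤ (1+v^2)^2/μ := by gcongr
    _ = 1/μ * (1+μ^2*t)^2 := by rw [hv2]; ring

variable {A : Type*} [NonUnitalCStarAlgebra A] [PartialOrder A] [StarOrderedRing A]

lemma tendsto_of_norm_sub_le {f : ℕ → A} {L : A} {c : ℕ → ℝ}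
    (hc : Filter.Tendsto c Filter.atTop (nhds 0))
    (h : ∀ n, ‖f n - L‖ ≤ c n) : Filter.Tendsto f Filter.atTop (nhds L) := by
  rw [tendsto_iff_norm_sub_tendsto_zero]
  exact squeeze_zero (fun n => norm_nonneg _) h hc

lemma tendsto_one_div_sqrt :
    Filter.Tendsto (fun m : ℕ => Real.sqrt (1/(m+1 : ℝ))) Filter.atTop (nhds 0) := by
  have := (tendsto_one_div_add_atTop_nhds_zero_nat).sqrt
  simpa using this

lemma sqrtb_conj_mem_her (b : A) (hb : 0 ≤ b) (u : A) :
    cfcₙ Real.sqrt b * u * cfcₙ Real.sqrt b ∈ her b := by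
  have hbsa : IsSelfAdjoint b := .of_nonneg hb
  have hσ : ∀ t ∈ σₙ ℝ b, 0 ≤ t := quasispectrum_nonneg_of_nonneg b hb
  set g : ℕ → ℝ → ℝ := fun m t => Real.sqrt t * (t + 1/(m+1 : ℝ))⁻¹ with hg
  have hgc : ∀ m, ContinuousOn (g m) (σₙ ℝ b) := by
    intro m
    apply ContinuousOn.mul (Real.continuous_sqrt.continuousOn)
    apply ContinuousOn.inv₀ (by fun_prop)
    intro t ht
    have := hσ t ht
    positivity
  have hg0 : ∀ m, g m 0 = 0 := by intro m; simp [hg]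
  set q : ℕ → A := fun m => cfcₙ (g m) b with hq
  have hbq : ∀ m, b * q m = cfcₙ (fun t => t * g m t) b := fun m =>
    id_mul_cfcₙ (g m) b (hgc m) (hg0 m) hbsa
  have hqb : ∀ m, q m * b = b * q m := by
    intro m
    have h := (cfcₙ_commute_cfcₙ (g m) id b).eq
    rwa [cfcₙ_id ℝ b] at h
  have hnorm : ∀ m, ‖b * q m - cfcₙ Real.sqrt b‖ ≤ Real.sqrt (1/(m+1 : ℝ)) := by
    intro m
    rw [hbq m, ← cfcₙ_sub (fun t => t * g m t) Real.sqrt b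
      (by exact continuousOn_id.mul (hgc m)) (by simp [hg0 m])
      Real.continuous_sqrt.continuousOn Real.sqrt_zero]
    exact norm_cfcₙ_le fun t ht => by
      simpa [Real.norm_eq_abs, hg] using sc_sqrt_aux t (1/(m+1:ℝ)) (hσ t ht) (by positivity)
  have hT : Filter.Tendsto (fun m => b * q m) Filter.atTop (nhds (cfcₙ Real.sqrt b)) :=
    tendsto_of_norm_sub_le tendsto_one_div_sqrt hnorm
  have hT' : Filter.Tendsto (fun m => q m * b) Filter.atTop (nhds (cfcₙ Real.sqrt b)) := by
    simpa only [hqb] using hT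
  have final : Filter.Tendsto (fun m => (b * q m) * u * (q m * b)) Filter.atTop
      (nhds (cfcₙ Real.sqrt b * u * cfcₙ Real.sqrt b)) :=
    (hT.mul tendsto_const_nhds).mul hT'
  exact mem_closure_of_tendsto final (Filter.Eventually.of_forall fun m =>
    ⟨q m * u * q m, by simp [mul_assoc]⟩)

lemma sqrt_mem_her {b : A} (y : A) (hb : 0 ≤ b) (hy : 0 ≤ y) (hyher : y ∈ her b) :
    cfcₙ Real.sqrt y ∈ her b := by
  have hysa : IsSelfAdjoint y := .of_nonneg hy
  have hσ : ∀ t ∈ σₙ ℝ y, 0 ≤ t := quasispectrum_nonneg_of_nonneg y hy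
  set g : ℕ → ℝ → ℝ := fun m t => Real.sqrt t * ((m+1:ℝ))^4 * ((1+((m+1:ℝ))^2*t)⁻¹)^2 with hg
  have hgc : ∀ m, ContinuousOn (g m) (σₙ ℝ y) := by
    intro m
    apply ContinuousOn.mul
    · exact (Real.continuous_sqrt.continuousOn.mul continuousOn_const)
    · apply ContinuousOn.pow
      apply ContinuousOn.inv₀ (by fun_prop)
      intro t ht
      have := hσ t ht
      positivity
  have hg0 : ∀ m, g m 0 = 0 := by intro m; simp [hg]
  have hc : ∀ m, y * cfcₙ (g m) y * y = cfcₙ (fun t => t * g m t * t) y := by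
    intro m
    rw [id_mul_cfcₙ (g m) y (hgc m) (hg0 m) hysa,
      cfcₙ_mul_id (fun t => t * g m t) y (by exact continuousOn_id.mul (hgc m))
        (by simp [hg0 m]) hysa]
  have hnorm : ∀ m, ‖y * cfcₙ (g m) y * y - cfcₙ Real.sqrt y‖ ≤ 1/(m+1:ℝ) := by
    intro m
    rw [hc m, ← cfcₙ_sub (fun t => t * g m t * t) Real.sqrt y
      (by exact (continuousOn_id.mul (hgc m)).mul continuousOn_id) (by simp [hg0 m])
      Real.continuous_sqrt.continuousOn Real.sqrt_zero]
    refine norm_cfcₙ_le fun t ht => ?_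
    rw [Real.norm_eq_abs, abs_sub_comm]
    simpa [hg] using sc_sqrt_quad t (m+1:ℝ) (hσ t ht) (by positivity)
  have hT : Filter.Tendsto (fun m => y * cfcₙ (g m) y * y) Filter.atTop
      (nhds (cfcₙ Real.sqrt y)) :=
    tendsto_of_norm_sub_le tendsto_one_div_add_atTop_nhds_zero_nat hnorm
  have := mem_closure_of_tendsto hT (Filter.Eventually.of_forall fun m =>
    her_conj b hyher (cfcₙ (g m) y))
  rwa [(her_isClosed b).closure_eq] at this

lemma mul_star_mem_her (b : A) (hb : 0 ≤ b) (x : A)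
    (hx : x ∈ closure (Set.range fun g : A => cfcₙ Real.sqrt b * g)) :
    x * star x ∈ her b := by
  obtain ⟨f, hfD, hf⟩ := mem_closure_iff_seq_limit.mp hx
  have hT : Filter.Tendsto (fun n => f n * star (f n)) Filter.atTop (nhds (x * star x)) :=
    hf.mul hf.star
  have hsq : IsSelfAdjoint (cfcₙ Real.sqrt b) := cfcₙ_predicate _ b
  have hmem : ∀ n, f n * star (f n) ∈ her b := by
    intro n
    obtain ⟨g, hg⟩ := hfD n
    rw [← hg, star_mul, hsq.star_eq, show cfcₙ Real.sqrt b * g * (star g * cfcₙ Real.sqrt b)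
      = cfcₙ Real.sqrt b * (g * star g) * cfcₙ Real.sqrt b by simp [mul_assoc]]
    exact sqrtb_conj_mem_her b hb _
  have := mem_closure_of_tendsto hT (Filter.Eventually.of_forall hmem)
  rwa [(her_isClosed b).closure_eq] at this

end Her2
section Backward

local notation "σₙ" => quasispectrum

lemma sc_h_le_one (t ν : ℝ) (ht : 0 ≤ t) (hν : 0 < ν) :
    |(ν*t*(1+ν*t)⁻¹)^2| ≤ 1 := by
  have hd : 0 < 1 + ν*t := by positivity
  have h1 : 0 ≤ ν*t*(1+ν*t)⁻¹ := by positivity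
  have h2 : ν*t*(1+ν*t)⁻¹ ≤ 1 := by
    rw [mul_inv_le_iff₀ hd]; linarith
  rw [abs_of_nonneg (by positivity)]
  calc (ν*t*(1+ν*t)⁻¹)^2 ≤ 1^2 := by apply pow_le_pow_left₀ h1 h2
    _ = 1 := one_pow 2

lemma sc_approx (t ν : ℝ) (ht : 0 ≤ t) (hν : 0 < ν) :
    |(ν*t*(1+ν*t)⁻¹)^2 * t - t| ≤ 3/ν := by
  have hd : 0 < 1 + ν*t := by positivity
  have h1 : (ν*t*(1+ν*t)⁻¹)^2 * t - t = -(t*(1+2*ν*t)/(1+ν*t)^2) := by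
    field_simp; ring
  rw [h1, abs_neg, abs_of_nonneg (by positivity), div_le_iff₀ (by positivity),
    div_mul_eq_mul_div, le_div_iff₀ hν]
  nlinarith [sq_nonneg (ν*t), ht, hν.le, mul_nonneg ht hν.le]

lemma sc_ftf (t ν : ℝ) (ht : 0 ≤ t) :
    (ν*Real.sqrt t*(1+ν*t)⁻¹) * t * (ν*Real.sqrt t*(1+ν*t)⁻¹) = (ν*t*(1+ν*t)⁻¹)^2 := by
  have hst : Real.sqrt t * Real.sqrt t = t := Real.mul_self_sqrt ht
  have h : (ν*Real.sqrt t*(1+ν*t)⁻¹) * t * (ν*Real.sqrt t*(1+ν*t)⁻¹)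
      = ν^2*(Real.sqrt t*Real.sqrt t)*t*((1+ν*t)⁻¹)^2 := by ring
  rw [h, hst]; ring

lemma sc_cube (t s : ℝ) (ht : 0 ≤ t) (hs : 0 < s) :
    |(Real.sqrt t * (t+s)⁻¹) * t * t * (Real.sqrt t * (t+s)⁻¹) - t| ≤ 2*s := by
  have hts : 0 < t + s := by linarith
  have hst : Real.sqrt t * Real.sqrt t = t := Real.mul_self_sqrt ht
  have h1 : (Real.sqrt t * (t+s)⁻¹) * t * t * (Real.sqrt t * (t+s)⁻¹) - t
      = -(t*(2*t*s+s^2)/(t+s)^2) := by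
    have h : (Real.sqrt t * (t+s)⁻¹) * t * t * (Real.sqrt t * (t+s)⁻¹)
        = (Real.sqrt t*Real.sqrt t)*t*t*((t+s)⁻¹)^2 := by ring
    rw [h, hst]
    field_simp
    ring
  rw [h1, abs_neg, abs_of_nonneg (by positivity), div_le_iff₀ (by positivity)]
  nlinarith [sq_nonneg (t-s), mul_nonneg ht hs.le, sq_nonneg s, sq_nonneg t,
    mul_nonneg (mul_nonneg ht ht) hs.le, mul_nonneg (mul_nonneg ht hs.le) hs.le]

variable {A : Type*} [NonUnitalCStarAlgebra A] [PartialOrder A] [StarOrderedRing A]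

lemma cfcₙ_sub_id (f : ℝ → ℝ) (a : A)
    (hf : ContinuousOn f (σₙ ℝ a)) (hf0 : f 0 = 0) (ha : IsSelfAdjoint a) :
    cfcₙ f a - a = cfcₙ (fun t => f t - t) a := by
  have h := cfcₙ_sub f (fun t : ℝ => t) a hf hf0 continuousOn_id rfl
  rw [cfcₙ_id' ℝ a] at h
  exact h.symm

lemma norm_cfcF_sub (a : A) (ha : 0 ≤ a) (ε : ℝ) (hε : 0 < ε) :
    ‖cfcₙ (fun t : ℝ => max (t - ε) 0) a - a‖ ≤ ε := by
  have hsa : IsSelfAdjoint a := .of_nonneg ha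
  have hc : ContinuousOn (fun t : ℝ => max (t - ε) 0) (σₙ ℝ a) :=
    ((continuous_id.sub continuous_const).max continuous_const).continuousOn
  have h0 : max ((0:ℝ) - ε) 0 = 0 := max_eq_right (by linarith)
  rw [cfcₙ_sub_id _ a hc h0 hsa]
  refine norm_cfcₙ_le fun t ht => ?_
  rw [Real.norm_eq_abs, abs_sub_comm]
  exact sc_dist_F ε t hε.le (quasispectrum_nonneg_of_nonneg a ha t ht)

/-- Every positive element of `her b` is approximately Cuntz-dominated by `b` with exact
conjugation form. -/
lemma her_cuntz (b : A) (hb : 0 ≤ b) (y : A) (hy : 0 ≤ y) (hyher : y ∈ her b)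
    {η : ℝ} (hη : 0 < η) : ∃ d : A, ‖star d * b * d - y‖ ≤ η := by
  have hbsa : IsSelfAdjoint b := .of_nonneg hb
  have hσb : ∀ t ∈ σₙ ℝ b, 0 ≤ t := quasispectrum_nonneg_of_nonneg b hb
  set s0 := cfcₙ Real.sqrt y with hs0
  have hs0her : s0 ∈ her b := sqrt_mem_her y hb hy hyher
  have hs0sa : IsSelfAdjoint s0 := cfcₙ_predicate _ y
  have hysa : IsSelfAdjoint y := .of_nonneg hy
  have hs0s0 : s0 * s0 = y := by
    rw [hs0, cfcₙ_mul' Real.sqrt Real.sqrt y Real.continuous_sqrt.continuousOn Real.sqrt_zero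
      Real.continuous_sqrt.continuousOn Real.sqrt_zero hysa]
    have heq : cfcₙ (fun t : ℝ => Real.sqrt t * Real.sqrt t) y = cfcₙ (fun t : ℝ => t) y :=
      cfcₙ_congr fun t ht => Real.mul_self_sqrt (quasispectrum_nonneg_of_nonneg y hy t ht)
    rw [heq, cfcₙ_id' ℝ y hysa]
  set η₁ := η/(‖s0‖+1) with hη₁
  have hη₁pos : 0 < η₁ := by positivity
  -- find an approximate unit index
  have hs0her' : s0 ∈ closure {x | ∃ u : A, x = b * u * b} := hs0her
  obtain ⟨p, hpD, hps0⟩ := Metric.mem_closure_iff.mp hs0her' (η₁/3) (by positivity)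
  obtain ⟨u, hu⟩ := hpD
  obtain ⟨n, hn⟩ := exists_nat_ge (9*(‖u*b‖+1)/η₁)
  set ν : ℝ := (n:ℝ)+1 with hνdef
  have hνpos : 0 < ν := by positivity
  have hνge : 9*(‖u*b‖+1)/η₁ ≤ ν := by
    rw [hνdef]; exact hn.trans (by linarith)
  set hfn : ℝ → ℝ := fun t => (ν*t*(1+ν*t)⁻¹)^2 with hhfn
  have hhc : ContinuousOn hfn (σₙ ℝ b) := by
    apply ContinuousOn.pow
    apply ContinuousOn.mul (by fun_prop)
    apply ContinuousOn.inv₀ (by fun_prop)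
    intro t ht
    have := hσb t ht
    positivity
  have hh0 : hfn 0 = 0 := by simp [hhfn]
  set P := cfcₙ hfn b with hP
  have hPnorm : ‖P‖ ≤ 1 := norm_cfcₙ_le fun t ht => by
    show ‖(ν*t*(1+ν*t)⁻¹)^2‖ ≤ 1
    rw [Real.norm_eq_abs]
    exact sc_h_le_one t ν (hσb t ht) hνpos
  have hPb : ‖P * b - b‖ ≤ 3/ν := by
    rw [hP, cfcₙ_mul_id hfn b hhc hh0 hbsa, cfcₙ_sub_id _ b (by exact hhc.mul continuousOn_id)
      (by simp [hh0]) hbsa]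
    exact norm_cfcₙ_le fun t ht => by
      simpa [Real.norm_eq_abs] using sc_approx t ν (hσb t ht) hνpos
  have hPs0 : ‖P * s0 - s0‖ ≤ η₁ := by
    have h1 : P * s0 - s0 = P * (s0 - p) + (P * p - p) + (p - s0) := by
      rw [mul_sub]; abel
    have h2 : P * p - p = (P * b - b) * (u * b) := by
      rw [hu]; simp [mul_assoc, sub_mul]
    have h3 : ‖P * (s0 - p)‖ ≤ η₁/3 := by
      calc ‖P * (s0 - p)‖ ≤ ‖P‖ * ‖s0 - p‖ := norm_mul_le _ _
        _ ≤ 1 * (η₁/3) := by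
            apply mul_le_mul hPnorm _ (norm_nonneg _) zero_le_one
            rw [← dist_eq_norm]
            exact hps0.le
        _ = η₁/3 := one_mul _
    have h4 : ‖P * p - p‖ ≤ η₁/3 := by
      rw [h2]
      calc ‖(P * b - b) * (u * b)‖ ≤ ‖P * b - b‖ * ‖u * b‖ := norm_mul_le _ _
        _ ≤ (3/ν) * ‖u*b‖ := by
            apply mul_le_mul_of_nonneg_right hPb (norm_nonneg _)
        _ ≤ η₁/3 := by
            rw [div_mul_eq_mul_div, div_le_div_iff₀ hνpos (by norm_num)]
            rw [div_le_iff₀ hη₁pos] at hνge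
            nlinarith [norm_nonneg (u*b), hη₁pos]
    have h5 : ‖p - s0‖ ≤ η₁/3 := by rw [← dist_eq_norm, dist_comm]; exact hps0.le
    calc ‖P * s0 - s0‖ ≤ ‖P * (s0 - p) + (P * p - p)‖ + ‖p - s0‖ := by
          rw [h1]; exact norm_add_le _ _
      _ ≤ ‖P * (s0 - p)‖ + ‖P * p - p‖ + ‖p - s0‖ := by
          gcongr; exact norm_add_le _ _
      _ ≤ η₁/3 + η₁/3 + η₁/3 := by gcongr
      _ = η₁ := by ring
  -- now conjugate
  set fν : ℝ → ℝ := fun t => ν*Real.sqrt t*(1+ν*t)⁻¹ with hfν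
  have hfc : ContinuousOn fν (σₙ ℝ b) := by
    apply ContinuousOn.mul (continuousOn_const.mul Real.continuous_sqrt.continuousOn)
    apply ContinuousOn.inv₀ (by fun_prop)
    intro t ht
    have := hσb t ht
    positivity
  have hf0 : fν 0 = 0 := by simp [hfν]
  set Q := cfcₙ fν b with hQ
  have hQsa : IsSelfAdjoint Q := cfcₙ_predicate _ b
  have hQbQ : Q * b * Q = P := by
    rw [hQ, hP, cfcₙ_mul_id fν b hfc hf0 hbsa,
      cfcₙ_mul' _ fν b (by exact hfc.mul continuousOn_id) (by simp [hf0]) hfc hf0 hbsa]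
    exact cfcₙ_congr fun t ht => sc_ftf t ν (hσb t ht)
  refine ⟨Q * s0, ?_⟩
  have hd : star (Q * s0) * b * (Q * s0) = s0 * P * s0 := by
    rw [star_mul, hQsa.star_eq, hs0sa.star_eq, ← hQbQ]
    simp [mul_assoc]
  rw [hd]
  have hfact : s0 * P * s0 - y = s0 * (P * s0 - s0) := by
    rw [← hs0s0]; simp [mul_sub, mul_assoc]
  rw [hfact]
  calc ‖s0 * (P * s0 - s0)‖ ≤ ‖s0‖ * ‖P * s0 - s0‖ := norm_mul_le _ _
    _ ≤ ‖s0‖ * η₁ := mul_le_mul_of_nonneg_left hPs0 (norm_nonneg _)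
    _ ≤ η := by
        rw [hη₁]
        rw [mul_div_assoc']
        rw [div_le_iff₀ (by positivity)]
        nlinarith [norm_nonneg s0, hη.le]

end Backward
section BackwardMain

local notation "σₙ" => quasispectrum

variable {A : Type*} [NonUnitalCStarAlgebra A] [PartialOrder A] [StarOrderedRing A]

lemma cutdown_to_cuntz (a b : A) (ha : 0 ≤ a) (hb : 0 ≤ b)
    (H : ∀ ε : ℝ, 0 < ε → ∃ x : A,
      cfcₙ (fun t : ℝ => max (t - ε) 0) a = star x * x ∧ x * star x ∈ her b) :
    CuntzLE a b := by
  suffices K : ∀ δ : ℝ, 0 < δ → ∃ d : A, ‖star d * b * d - a‖ ≤ δ by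
    choose d hd using fun n : ℕ => K (1/(n+1)) (by positivity)
    exact ⟨d, tendsto_of_norm_sub_le tendsto_one_div_add_atTop_nhds_zero_nat hd⟩
  intro δ hδ
  obtain ⟨x, hx1, hx2⟩ := H (δ/4) (by positivity)
  set e' := star x * x with he'
  have he'nn : 0 ≤ e' := star_mul_self_nonneg x
  have he'sa : IsSelfAdjoint e' := .of_nonneg he'nn
  have hσ : ∀ t ∈ σₙ ℝ e', 0 ≤ t := quasispectrum_nonneg_of_nonneg e' he'nn
  have hea : ‖e' - a‖ ≤ δ/4 := by rw [← hx1]; exact norm_cfcF_sub a ha (δ/4) (by positivity)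
  set s : ℝ := δ/8 with hsdef
  have hspos : 0 < s := by positivity
  set G : ℝ → ℝ := fun t => Real.sqrt t * (t + s)⁻¹ with hGdef
  have hGc : ContinuousOn G (σₙ ℝ e') := by
    apply ContinuousOn.mul Real.continuous_sqrt.continuousOn
    apply ContinuousOn.inv₀ (by fun_prop)
    intro t ht
    have := hσ t ht
    positivity
  have hG0 : G 0 = 0 := by simp [hGdef]
  set m := cfcₙ G e' with hm
  have hmsa : IsSelfAdjoint m := cfcₙ_predicate _ e'
  have hκ : m * (e' * e') * m = cfcₙ (fun t => G t * t * t * G t) e' := by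
    rw [show m * (e'*e') * m = ((m*e')*e')*m by simp [mul_assoc], hm,
      cfcₙ_mul_id G e' hGc hG0 he'sa,
      cfcₙ_mul_id (fun t => G t * t) e' (by exact hGc.mul continuousOn_id)
        (by simp [hG0]) he'sa,
      cfcₙ_mul' (fun t => G t * t * t) G e'
        (by exact (hGc.mul continuousOn_id).mul continuousOn_id) (by simp [hG0]) hGc hG0 he'sa]
  have hκe : ‖m * (e' * e') * m - e'‖ ≤ 2*s := by
    rw [hκ, cfcₙ_sub_id (fun t => G t * t * t * G t) e'
      (by exact ((hGc.mul continuousOn_id).mul continuousOn_id).mul hGc)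
      (by simp [hG0]) he'sa]
    refine norm_cfcₙ_le fun t ht => ?_
    rw [Real.norm_eq_abs]
    exact sc_cube t s (hσ t ht) hspos
  set η : ℝ := (δ/4)/(‖x*m‖^2+1) with hηdef
  have hηpos : 0 < η := by positivity
  obtain ⟨d₁, hd₁⟩ := her_cuntz b hb (x * star x) (mul_star_self_nonneg x) hx2 hηpos
  refine ⟨d₁ * (x * m), ?_⟩
  have hstar : star (d₁ * (x * m)) * b * (d₁ * (x * m))
      = (m * star x) * (star d₁ * b * d₁) * (x * m) := by
    simp [star_mul, hmsa.star_eq, mul_assoc]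
  have hmid : (m * star x) * (x * star x) * (x * m) = m * (e' * e') * m := by
    simp [he', mul_assoc]
  have hb1 : ‖(m * star x) * (star d₁ * b * d₁) * (x * m)
      - m * (e' * e') * m‖ ≤ δ/4 := by
    rw [← hmid, show (m * star x) * (star d₁ * b * d₁) * (x * m)
        - (m * star x) * (x * star x) * (x * m)
        = (m * star x) * ((star d₁ * b * d₁) - x * star x) * (x * m) by
      rw [mul_sub, sub_mul]]
    have hnms : ‖m * star x‖ = ‖x * m‖ := by
      rw [show m * star x = star (x * m) by rw [star_mul, hmsa.star_eq], norm_star]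
    calc ‖(m * star x) * ((star d₁ * b * d₁) - x * star x) * (x * m)‖
        ≤ ‖(m * star x) * ((star d₁ * b * d₁) - x * star x)‖ * ‖x * m‖ := norm_mul_le _ _
      _ ≤ ‖m * star x‖ * ‖(star d₁ * b * d₁) - x * star x‖ * ‖x * m‖ := by
          gcongr; exact norm_mul_le _ _
      _ ≤ ‖x * m‖ * η * ‖x * m‖ := by rw [hnms]; gcongr
      _ = ‖x * m‖^2 * η := by ring
      _ ≤ δ/4 := by
          rw [hηdef, mul_div_assoc']
          rw [div_le_iff₀ (by positivity)]
          nlinarith [sq_nonneg ‖x*m‖, hδ.le]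
  calc ‖star (d₁ * (x * m)) * b * (d₁ * (x * m)) - a‖
      ≤ ‖star (d₁ * (x * m)) * b * (d₁ * (x * m)) - m * (e' * e') * m‖
        + ‖m * (e' * e') * m - e'‖ + ‖e' - a‖ := by
        have := norm_sub_le_norm_sub_add_norm_sub (star (d₁ * (x * m)) * b * (d₁ * (x * m)))
          (m * (e' * e') * m) a
        calc ‖star (d₁ * (x * m)) * b * (d₁ * (x * m)) - a‖
            ≤ ‖star (d₁ * (x * m)) * b * (d₁ * (x * m)) - m * (e' * e') * m‖
              + ‖m * (e' * e') * m - a‖ := norm_sub_le_norm_sub_add_norm_sub _ _ _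
          _ ≤ _ := by
              have h2 := norm_sub_le_norm_sub_add_norm_sub (m * (e' * e') * m) e' a
              linarith
    _ ≤ δ/4 + 2*s + δ/4 := by
        gcongr
        rw [hstar]
        exact hb1
    _ ≤ δ := by rw [hsdef]; linarith

end BackwardMain
section ConjBound

variable {B : Type*} [CStarAlgebra B] [PartialOrder B] [StarOrderedRing B]

lemma cfc_mul' (f g : ℝ → ℝ) (a : B)
    (hf : ContinuousOn f (spectrum ℝ a)) (hg : ContinuousOn g (spectrum ℝ a))
    (ha : IsSelfAdjoint a) :
    cfc f a * cfc g a = cfc (fun t => f t * g t) a :=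
  (cfc_mul f g a hf hg).symm

lemma cfc_mul_id (f : ℝ → ℝ) (a : B)
    (hf : ContinuousOn f (spectrum ℝ a)) (ha : IsSelfAdjoint a) :
    cfc f a * a = cfc (fun t => f t * t) a := by
  calc cfc f a * a = cfc f a * cfc (fun t : ℝ => t) a := by rw [cfc_id' ℝ a]
    _ = _ := cfc_mul' f (fun t => t) a hf continuousOn_id ha

/-- Key conjugation estimate: if `H` is selfadjoint with `H * H ≤ P`, then
`‖H * cfc θ P * H‖` is bounded by `sup (θ t * t)` over the spectrum of `P`. -/
lemma conj_bound (H P : B) (hH : IsSelfAdjoint H) (hP : 0 ≤ P) (hHP : H * H ≤ P)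
    (θ : ℝ → ℝ) (hθ : ContinuousOn θ (spectrum ℝ P)) (hθ0 : ∀ t ∈ spectrum ℝ P, 0 ≤ θ t)
    {c : ℝ} (hc : 0 ≤ c) (hbound : ∀ t ∈ spectrum ℝ P, θ t * t ≤ c) :
    ‖H * cfc θ P * H‖ ≤ c := by
  have hPsa : IsSelfAdjoint P := .of_nonneg hP
  have hσ : ∀ t ∈ spectrum ℝ P, 0 ≤ t := fun t ht => spectrum_nonneg_of_nonneg hP ht
  set ν := cfc (fun t => Real.sqrt (θ t)) P with hν
  have hνsa : IsSelfAdjoint ν := cfc_predicate _ P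
  have hνc : ContinuousOn (fun t => Real.sqrt (θ t)) (spectrum ℝ P) :=
    Real.continuous_sqrt.comp_continuousOn hθ
  have hνν : ν * ν = cfc θ P := by
    rw [hν, cfc_mul' _ _ P hνc hνc hPsa]
    exact cfc_congr fun t ht => Real.mul_self_sqrt (hθ0 t ht)
  have key1 : H * cfc θ P * H = star (ν * H) * (ν * H) := by
    rw [star_mul, hνsa.star_eq, hH.star_eq, ← hνν]; simp [mul_assoc]
  have key3 : (ν * H) * star (ν * H) = ν * (H * H) * ν := by
    rw [star_mul, hνsa.star_eq, hH.star_eq]; simp [mul_assoc]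
  have key4 : ‖(ν * H) * star (ν * H)‖ ≤ ‖ν * P * ν‖ := by
    rw [key3]
    apply CStarAlgebra.norm_le_norm_of_nonneg_of_le
    · rw [show ν * (H * H) * ν = star (H * ν) * (H * ν) by
        rw [star_mul, hνsa.star_eq, hH.star_eq]; simp [mul_assoc]]
      exact star_mul_self_nonneg _
    · calc ν * (H * H) * ν = star ν * (H * H) * ν := by rw [hνsa.star_eq]
        _ ≤ star ν * P * ν := star_left_conjugate_le_conjugate hHP ν
        _ = ν * P * ν := by rw [hνsa.star_eq]
  have key5 : ‖ν * P * ν‖ ≤ c := by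
    have hform : ν * P * ν = cfc (fun t => Real.sqrt (θ t) * t * Real.sqrt (θ t)) P := by
      rw [hν, cfc_mul_id _ P hνc hPsa,
        cfc_mul' (fun t => Real.sqrt (θ t) * t) _ P (by exact hνc.mul continuousOn_id) hνc hPsa]
    rw [hform]
    refine norm_cfc_le hc fun t ht => ?_
    rw [Real.norm_eq_abs]
    have h1 : Real.sqrt (θ t) * t * Real.sqrt (θ t) = θ t * t := by
      rw [show Real.sqrt (θ t) * t * Real.sqrt (θ t)
        = (Real.sqrt (θ t) * Real.sqrt (θ t)) * t by ring, Real.mul_self_sqrt (hθ0 t ht)]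
    rw [h1, abs_of_nonneg (mul_nonneg (hθ0 t ht) (hσ t ht))]
    exact hbound t ht
  calc ‖H * cfc θ P * H‖ = ‖star (ν * H) * (ν * H)‖ := by rw [key1]
    _ = ‖ν * H‖ * ‖ν * H‖ := CStarRing.norm_star_mul_self
    _ = ‖(ν * H) * star (ν * H)‖ := CStarRing.norm_self_mul_star.symm
    _ ≤ ‖ν * P * ν‖ := key4
    _ ≤ c := key5

end ConjBound

section ScalarFwd

lemma sc_phi_sq (t s : ℝ) (ht : 0 ≤ t) (hs : 0 < s) :
    (Real.sqrt (t+s))⁻¹ * t * (Real.sqrt (t+s))⁻¹ = t * (t+s)⁻¹ := by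
  have h1 : (Real.sqrt (t+s))⁻¹ * t * (Real.sqrt (t+s))⁻¹
      = t * (Real.sqrt (t+s) * Real.sqrt (t+s))⁻¹ := by
    rw [mul_inv]; ring
  rw [h1, Real.mul_self_sqrt (by linarith)]

lemma sc_I2_nonneg (t s : ℝ) (ht : 0 ≤ t) (hs : 0 < s) :
    0 ≤ 1 - (Real.sqrt (t+s))⁻¹ * t * (Real.sqrt (t+s))⁻¹ := by
  rw [sc_phi_sq t s ht hs, sub_nonneg, mul_inv_le_iff₀ (by linarith)]
  linarith

lemma sc_I2_bound (t s : ℝ) (ht : 0 ≤ t) (hs : 0 < s) :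
    (1 - (Real.sqrt (t+s))⁻¹ * t * (Real.sqrt (t+s))⁻¹) * t ≤ s := by
  rw [sc_phi_sq t s ht hs]
  have hts : 0 < t + s := by linarith
  have h1 : 1 - t * (t+s)⁻¹ = s * (t+s)⁻¹ := by field_simp; ring
  rw [h1]
  rw [mul_comm (s * (t+s)⁻¹) t, ← mul_assoc, mul_inv_le_iff₀ hts]
  nlinarith

lemma sc_I3_aux (t s s' : ℝ) (ht : 0 ≤ t) (hs : 0 < s) (hss' : s ≤ s') :
    ((Real.sqrt (t+s))⁻¹ - (Real.sqrt (t+s'))⁻¹) * t ≤ Real.sqrt s' := by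
  have hs' : 0 < s' := lt_of_lt_of_le hs hss'
  set α := Real.sqrt (t+s) with hαd
  set β := Real.sqrt (t+s') with hβd
  set γ := Real.sqrt t with hγd
  set σ := Real.sqrt s' with hσd
  have hα2 : α * α = t + s := Real.mul_self_sqrt (by linarith)
  have hβ2 : β * β = t + s' := Real.mul_self_sqrt (by linarith)
  have hγ2 : γ * γ = t := Real.mul_self_sqrt ht
  have hσ2 : σ * σ = s' := Real.mul_self_sqrt hs'.le
  have hαpos : 0 < α := Real.sqrt_pos.mpr (by linarith)
  have hβpos : 0 < β := Real.sqrt_pos.mpr (by linarith)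
  have hγnn : 0 ≤ γ := Real.sqrt_nonneg t
  have hσnn : 0 ≤ σ := Real.sqrt_nonneg s'
  have hγα : γ ≤ α := Real.sqrt_le_sqrt (by linarith)
  have hγβ : γ ≤ β := Real.sqrt_le_sqrt (by linarith)
  have hαβ : α ≤ β := Real.sqrt_le_sqrt (by linarith)
  have hinv : α⁻¹ - β⁻¹ = (β - α) / (α * β) := by
    field_simp
  rw [hinv, div_mul_eq_mul_div, div_le_iff₀ (by positivity)]
  -- goal : (β - α) * t ≤ σ * (α * β)
  rcases le_total t s' with hts' | hs't
  · -- t ≤ s' : γ ≤ σ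
    have hγσ : γ ≤ σ := by
      nlinarith
    nlinarith [mul_nonneg hγnn hγnn, mul_le_mul hγσ hγα hγnn hσnn,
      mul_le_mul_of_nonneg_right (mul_le_mul hγσ hγα hγnn hσnn) hβpos.le,
      mul_nonneg ht hαpos.le]
  · -- s' ≤ t : σ ≤ γ
    have hσγ : σ ≤ γ := by nlinarith
    have hsum : (β - α) * (β + α) = s' - s := by nlinarith
    have hβα : 0 ≤ β - α := by linarith
    have h2γ : 2 * γ ≤ β + α := by linarith
    have h1 : (β - α) * (2 * γ) ≤ s' := by
      calc (β - α) * (2 * γ) ≤ (β - α) * (β + α) := by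
            apply mul_le_mul_of_nonneg_left h2γ hβα
        _ = s' - s := hsum
        _ ≤ s' := by linarith
    -- (β-α) * t * 2 ≤ s' * γ   (since t = γ²)
    have h2 : (β - α) * t * 2 ≤ s' * γ := by
      calc (β - α) * t * 2 = ((β - α) * (2 * γ)) * γ := by rw [← hγ2]; ring
        _ ≤ s' * γ := mul_le_mul_of_nonneg_right h1 hγnn
    -- σ * (α * β) ≥ σ * γ * γ = σ * t  and  s' * γ = σ² γ ≤ σ γ² * ... finish
    have h3 : σ * t ≤ σ * (α * β) := by
      apply mul_le_mul_of_nonneg_left _ hσnn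
      calc t = γ * γ := hγ2.symm
        _ ≤ α * β := mul_le_mul hγα hγβ hγnn hαpos.le
    -- s' * γ = σ*σ*γ ≤ σ*γ*γ = σ * t  (σ ≤ γ)
    have h4 : s' * γ ≤ σ * t := by
      calc s' * γ = σ * σ * γ := by rw [hσ2]
        _ ≤ σ * γ * γ := by
            nlinarith [mul_le_mul_of_nonneg_left (mul_le_mul_of_nonneg_right hσγ hγnn) hσnn]
        _ = σ * t := by rw [mul_assoc, hγ2]
    linarith [mul_nonneg hσnn ht]

lemma sc_I3 (t s s' : ℝ) (ht : 0 ≤ t) (hs : 0 < s) (hs' : 0 < s') :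
    (((Real.sqrt (t+s))⁻¹ - (Real.sqrt (t+s'))⁻¹) * t
      * ((Real.sqrt (t+s))⁻¹ - (Real.sqrt (t+s'))⁻¹)) * t ≤ max s s' := by
  set d := (Real.sqrt (t+s))⁻¹ - (Real.sqrt (t+s'))⁻¹ with hd
  have hsq : d * t * d * t = (d * t)^2 := by ring
  rw [hsq]
  rcases le_total s s' with h | h
  · have h1 := sc_I3_aux t s s' ht hs h
    have h2 : 0 ≤ d := by
      rw [hd, sub_nonneg]
      apply inv_anti₀ (Real.sqrt_pos.mpr (by linarith))
      exact Real.sqrt_le_sqrt (by linarith)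
    have h3 : 0 ≤ d * t := mul_nonneg h2 ht
    calc (d * t)^2 ≤ (Real.sqrt s')^2 := by
          apply pow_le_pow_left₀ h3 h1
      _ = s' := Real.sq_sqrt (by linarith)
      _ ≤ max s s' := le_max_right _ _
  · have h1 := sc_I3_aux t s' s ht hs' h
    have h2 : 0 ≤ -d := by
      rw [hd, neg_sub, sub_nonneg]
      apply inv_anti₀ (Real.sqrt_pos.mpr (by linarith))
      exact Real.sqrt_le_sqrt (by linarith)
    have h3 : 0 ≤ (-d) * t := mul_nonneg h2 ht
    calc (d * t)^2 = ((-d) * t)^2 := by ring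
      _ ≤ (Real.sqrt s)^2 := by
          apply pow_le_pow_left₀ h3
          rw [hd] at *
          calc (-((Real.sqrt (t+s))⁻¹ - (Real.sqrt (t+s'))⁻¹)) * t
              = ((Real.sqrt (t+s'))⁻¹ - (Real.sqrt (t+s))⁻¹) * t := by ring
            _ ≤ Real.sqrt s := h1
      _ = s := Real.sq_sqrt (by linarith)
      _ ≤ max s s' := le_max_left _ _

lemma sc_I3_nonneg (t s s' : ℝ) (ht : 0 ≤ t) :
    0 ≤ ((Real.sqrt (t+s))⁻¹ - (Real.sqrt (t+s'))⁻¹) * t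
      * ((Real.sqrt (t+s))⁻¹ - (Real.sqrt (t+s'))⁻¹) := by
  set d := (Real.sqrt (t+s))⁻¹ - (Real.sqrt (t+s'))⁻¹
  calc (0:ℝ) ≤ d^2 * t := by positivity
    _ = d * t * d := by ring

end ScalarFwd
section ForwardMain

local notation "σₙ" => quasispectrum

variable {A : Type*} [NonUnitalCStarAlgebra A] [PartialOrder A] [StarOrderedRing A]

set_option maxHeartbeats 2000000 in
lemma cuntz_to_cutdown (a b : A) (ha : 0 ≤ a) (hb : 0 ≤ b) (hab : CuntzLE a b)
    (ε : ℝ) (hε : 0 < ε) :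
    ∃ x : A, cfcₙ (fun t : ℝ => max (t - ε) 0) a = star x * x ∧ x * star x ∈ her b := by
  classical
  obtain ⟨dseq, hd⟩ := hab
  obtain ⟨N, hN⟩ := Metric.tendsto_atTop.mp hd ε hε
  set d₀ := dseq N with hd₀
  set c := star d₀ * b * d₀ with hc
  have hca : ‖a - c‖ < ε := by
    rw [norm_sub_rev]
    simpa [hc, hd₀, dist_eq_norm] using hN N le_rfl
  set δ' := ε - ‖a - c‖ with hδ'
  have hδ'pos : 0 < δ' := by rw [hδ']; linarith
  have hsa : IsSelfAdjoint a := .of_nonneg ha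
  have hbsa : IsSelfAdjoint b := .of_nonneg hb
  have hσa : ∀ t ∈ σₙ ℝ a, 0 ≤ t := quasispectrum_nonneg_of_nonneg a ha
  -- cut-down elements
  set F : ℝ → ℝ := fun t => max (t - ε) 0 with hF
  set sF : ℝ → ℝ := fun t => Real.sqrt (max (t - ε) 0) with hsF
  have hFc : ContinuousOn F (σₙ ℝ a) :=
    ((continuous_id.sub continuous_const).max continuous_const).continuousOn
  have hF0 : F 0 = 0 := max_eq_right (by linarith)
  have hsFc : ContinuousOn sF (σₙ ℝ a) := Real.continuous_sqrt.comp_continuousOn hFc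
  have hsF0 : sF 0 = 0 := by
    show Real.sqrt (max ((0:ℝ) - ε) 0) = 0
    rw [show max ((0:ℝ) - ε) 0 = 0 from max_eq_right (by linarith), Real.sqrt_zero]
  set e := cfcₙ F a with he
  set h₀ := cfcₙ sF a with hh₀
  have he_nn : 0 ≤ e := cfcₙ_nonneg fun t _ => le_max_right _ _
  have he_sa : IsSelfAdjoint e := .of_nonneg he_nn
  have hh_sa : IsSelfAdjoint h₀ := cfcₙ_predicate _ a
  have hee : h₀ * h₀ = e := by
    rw [hh₀, cfcₙ_mul' sF sF a hsFc hsF0 hsFc hsF0 hsa, he]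
    exact cfcₙ_congr fun t _ => Real.mul_self_sqrt (le_max_right _ _)
  have hah : h₀ * a * h₀ = e * e + ε • e := by
    rw [hh₀, cfcₙ_mul_id sF a hsFc hsF0 hsa,
      cfcₙ_mul' (fun t => sF t * t) sF a (by exact hsFc.mul continuousOn_id)
        (by simp [hsF0]) hsFc hsF0 hsa]
    have h1 : cfcₙ (fun t => sF t * t * sF t) a = cfcₙ (fun t => F t * F t + ε * F t) a := by
      apply cfcₙ_congr
      intro t _
      show sF t * t * sF t = F t * F t + ε * F t
      rw [show sF t * t * sF t = (sF t * sF t) * t by ring, hsF]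
      simp only
      rw [Real.mul_self_sqrt (le_max_right _ _)]
      exact sc_F_mul_id ε t hε.le
    rw [h1, cfcₙ_add (fun t => F t * F t) (fun t => ε * F t) a (by exact hFc.mul hFc)
        (by simp [hF0]) (by exact continuousOn_const.mul hFc) (by simp [hF0]),
      cfcₙ_mul F F a hFc hF0 hFc hF0, ← he]
    congr 1
    exact cfcₙ_smul ε F a hFc hF0
  have hcsa : IsSelfAdjoint c := by rw [hc]; exact hbsa.conjugate' d₀
  have hconj : h₀ * (a - c) * h₀ ≤ ‖a - c‖ • e := by
    have h1 := CStarAlgebra.star_left_conjugate_le_norm_smul (a := h₀) (b := a - c) (hsa.sub hcsa)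
    rwa [hh_sa.star_eq, hee] at h1
  have hkey : δ' • e ≤ h₀ * c * h₀ := by
    have h1 : h₀ * c * h₀ = h₀ * a * h₀ - h₀ * (a - c) * h₀ := by
      rw [mul_sub, sub_mul]; abel
    rw [h1, hah]
    have hee_nn : 0 ≤ e * e := by
      have := star_mul_self_nonneg e; rwa [he_sa.star_eq] at this
    have h2 : e * e + ε • e - ‖a - c‖ • e = e * e + δ' • e := by
      rw [hδ', sub_smul]; abel
    calc δ' • e ≤ e * e + δ' • e := le_add_of_nonneg_left hee_nn
      _ = e * e + ε • e - ‖a - c‖ • e := h2.symm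
      _ ≤ e * e + ε • e - h₀ * (a - c) * h₀ := sub_le_sub_left hconj _
  -- square root of b and the element w
  set sqb := cfcₙ Real.sqrt b with hsqb
  have hσb : ∀ t ∈ σₙ ℝ b, 0 ≤ t := quasispectrum_nonneg_of_nonneg b hb
  have hsqb_sa : IsSelfAdjoint sqb := cfcₙ_predicate _ b
  have hsqb2 : sqb * sqb = b := by
    rw [hsqb, cfcₙ_mul' _ _ b Real.continuous_sqrt.continuousOn Real.sqrt_zero
      Real.continuous_sqrt.continuousOn Real.sqrt_zero hbsa]
    have heq : cfcₙ (fun t : ℝ => Real.sqrt t * Real.sqrt t) b = cfcₙ (fun t : ℝ => t) b :=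
      cfcₙ_congr fun t ht => Real.mul_self_sqrt (hσb t ht)
    rw [heq, cfcₙ_id' ℝ b hbsa]
  set r : ℝ := Real.sqrt δ'⁻¹ with hr
  set v := r • (d₀ * h₀) with hv
  set w := sqb * v with hw
  have hzbz : star (d₀ * h₀) * b * (d₀ * h₀) = h₀ * c * h₀ := by
    rw [star_mul, hh_sa.star_eq, hc]; simp [mul_assoc]
  have hww : star w * w = δ'⁻¹ • (h₀ * c * h₀) := by
    have hsq : star sqb * sqb = b := by rw [hsqb_sa.star_eq, hsqb2]
    calc star w * w = star v * (star sqb * sqb) * v := by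
          rw [hw, star_mul]; simp [mul_assoc]
      _ = star v * b * v := by rw [hsq]
      _ = (r * r) • (star (d₀ * h₀) * b * (d₀ * h₀)) := by
          rw [hv, star_smul, star_trivial]
          simp [smul_mul_assoc, mul_smul_comm, smul_smul]
      _ = δ'⁻¹ • (h₀ * c * h₀) := by
          rw [Real.mul_self_sqrt (by positivity), hzbz]
  have hew : e ≤ star w * w := by
    rw [hww]
    calc e = δ'⁻¹ • (δ' • e) := by rw [smul_smul, inv_mul_cancel₀ hδ'pos.ne', one_smul]
      _ ≤ δ'⁻¹ • (h₀ * c * h₀) := smul_le_smul_of_nonneg_left hkey (by positivity)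
  -- move to the unitization
  set W : Unitization ℂ A := (w : Unitization ℂ A) with hW
  set P := star W * W with hP
  have hPA : P = ((star w * w : A) : Unitization ℂ A) := by
    rw [hP, hW, ← Unitization.inr_star, ← Unitization.inr_mul]
  have hEP : ((e : A) : Unitization ℂ A) ≤ P := by
    rw [hPA]
    exact (Unitization.inr_le_iff e (star w * w) he_sa (.star_mul_self w)).mpr hew
  have hP0 : 0 ≤ P := star_mul_self_nonneg W
  have hPsa : IsSelfAdjoint P := .star_mul_self W
  have hσP : ∀ t ∈ spectrum ℝ P, 0 ≤ t := fun t ht => spectrum_nonneg_of_nonneg hP0 ht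
  set Hb : Unitization ℂ A := ((h₀ : A) : Unitization ℂ A) with hHb
  have hHbsa : IsSelfAdjoint Hb := hh_sa.inr ℂ
  have hHbHb : Hb * Hb = ((e : A) : Unitization ℂ A) := by
    rw [hHb, ← Unitization.inr_mul, hee]
  have hHP : Hb * Hb ≤ P := hHbHb ▸ hEP
  set φ : ℝ → ℝ → ℝ := fun s t => (Real.sqrt (t + s))⁻¹ with hφ
  have hφc : ∀ s : ℝ, 0 < s → ContinuousOn (φ s) (spectrum ℝ P) := by
    intro s hs
    have hcont : Continuous fun t : ℝ => Real.sqrt (t + s) :=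
      Real.continuous_sqrt.comp (continuous_id.add continuous_const)
    apply ContinuousOn.inv₀ hcont.continuousOn
    intro t ht
    have h1 := hσP t ht
    exact (Real.sqrt_pos.mpr (by linarith)).ne'
  set RR : ℝ → Unitization ℂ A := fun s => cfc (φ s) P with hRR
  have hRsa : ∀ s, IsSelfAdjoint (RR s) := fun s => cfc_predicate _ P
  set xt : ℝ → Unitization ℂ A := fun s => W * RR s * Hb with hxt
  -- the approximation bound (I2)
  have hI2 : ∀ s : ℝ, 0 < s →
      ‖star (xt s) * xt s - ((e : A) : Unitization ℂ A)‖ ≤ s := by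
    intro s hs
    have hstar : star (xt s) = Hb * RR s * star W := by
      show star (W * RR s * Hb) = _
      rw [star_mul, star_mul, (hRsa s).star_eq, hHbsa.star_eq, mul_assoc]
    have hform : star (xt s) * xt s = Hb * (RR s * (star W * W) * RR s) * Hb := by
      rw [hstar, show xt s = W * RR s * Hb from rfl]
      simp [mul_assoc]
    have hRPR : RR s * (star W * W) * RR s = cfc (fun t => φ s t * t * φ s t) P := by
      rw [← hP, hRR]
      simp only
      rw [cfc_mul_id (φ s) P (hφc s hs) hPsa,
        cfc_mul' (fun t => φ s t * t) (φ s) P (by exact (hφc s hs).mul continuousOn_id)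
          (hφc s hs) hPsa]
    have hdiff : ((e : A) : Unitization ℂ A) - star (xt s) * xt s
        = Hb * cfc (fun t => 1 - φ s t * t * φ s t) P * Hb := by
      rw [hform, hRPR, ← hHbHb,
        cfc_sub (fun _ => 1) (fun t => φ s t * t * φ s t) P continuousOn_const
          (by exact ((hφc s hs).mul continuousOn_id).mul (hφc s hs)), cfc_const_one ℝ P]
      rw [mul_sub, sub_mul, mul_one]
    rw [norm_sub_rev, hdiff]
    have hθc : ContinuousOn (fun t => 1 - φ s t * t * φ s t) (spectrum ℝ P) :=
      continuousOn_const.sub (((hφc s hs).mul continuousOn_id).mul (hφc s hs))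
    exact conj_bound Hb P hHbsa hP0 hHP _ hθc
      (fun t ht => sc_I2_nonneg t s (hσP t ht) hs) hs.le
      (fun t ht => sc_I2_bound t s (hσP t ht) hs)
  -- the Cauchy bound (I3)
  have hI3 : ∀ s s' : ℝ, 0 < s → 0 < s' → ‖xt s - xt s'‖ ≤ Real.sqrt (max s s') := by
    intro s s' hs hs'
    have hd1 : xt s - xt s' = W * (RR s - RR s') * Hb := by
      show W * RR s * Hb - W * RR s' * Hb = _
      rw [mul_sub, sub_mul]
    have hD : RR s - RR s' = cfc (fun t => φ s t - φ s' t) P := by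
      rw [hRR]; simp only; rw [cfc_sub (φ s) (φ s') P (hφc s hs) (hφc s' hs')]
    have hDsa : IsSelfAdjoint (RR s - RR s') := (hRsa s).sub (hRsa s')
    have hss : star (xt s - xt s') * (xt s - xt s')
        = Hb * ((RR s - RR s') * (star W * W) * (RR s - RR s')) * Hb := by
      rw [hd1, star_mul, star_mul, hDsa.star_eq, hHbsa.star_eq]
      simp [mul_assoc]
    have hDPD : (RR s - RR s') * (star W * W) * (RR s - RR s')
        = cfc (fun t => (φ s t - φ s' t) * t * (φ s t - φ s' t)) P := by
      rw [← hP, hD, cfc_mul_id _ P (by exact (hφc s hs).sub (hφc s' hs')) hPsa,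
        cfc_mul' _ _ P (by exact ((hφc s hs).sub (hφc s' hs')).mul continuousOn_id)
          (by exact (hφc s hs).sub (hφc s' hs')) hPsa]
    have hbound : ‖star (xt s - xt s') * (xt s - xt s')‖ ≤ max s s' := by
      rw [hss, hDPD]
      have hDc : ContinuousOn (fun t => φ s t - φ s' t) (spectrum ℝ P) :=
        (hφc s hs).sub (hφc s' hs')
      have hθc : ContinuousOn (fun t => (φ s t - φ s' t) * t * (φ s t - φ s' t))
          (spectrum ℝ P) := (hDc.mul continuousOn_id).mul hDc
      exact conj_bound Hb P hHbsa hP0 hHP _ hθc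
        (fun t ht => sc_I3_nonneg t s s' (hσP t ht)) (le_max_of_le_left hs.le)
        (fun t ht => sc_I3 t s s' (hσP t ht) hs hs')
    have h2 : ‖xt s - xt s'‖^2 ≤ max s s' := by
      calc ‖xt s - xt s'‖^2 = ‖star (xt s - xt s') * (xt s - xt s')‖ := by
            rw [CStarRing.norm_star_mul_self]; ring
        _ ≤ max s s' := hbound
    exact Real.le_sqrt_of_sq_le h2
  -- A-side approximants
  set g : ℝ → A := fun s => ((RR s).fst • v) * h₀ + v * (RR s).snd * h₀ with hg
  set y : ℝ → A := fun s => sqb * g s with hy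
  have h_alg : ∀ s, sqb * g s = ((RR s).fst • w) * h₀ + w * (RR s).snd * h₀ := by
    intro s
    rw [hg, hw]; simp only
    rw [mul_add]
    congr 1
    · rw [← mul_assoc, mul_smul_comm]
    · simp [mul_assoc]
  have h_yinr : ∀ s, ((y s : A) : Unitization ℂ A) = xt s := by
    intro s
    have hsplit : RR s = Unitization.inl (RR s).fst + ((RR s).snd : Unitization ℂ A) :=
      (Unitization.inl_fst_add_inr_snd_eq (RR s)).symm
    show ((sqb * g s : A) : Unitization ℂ A) = W * RR s * Hb
    conv_rhs => rw [hsplit]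
    rw [h_alg s, mul_add, add_mul, hW, hHb, Unitization.inr_mul_inl]
    simp only [← Unitization.inr_mul, ← Unitization.inr_add]
  -- the Cauchy sequence
  set sN : ℕ → ℝ := fun n => 1/((n:ℝ)+1) with hsN
  have hsNpos : ∀ n, 0 < sN n := fun n => by positivity
  have hsNle : ∀ n m : ℕ, n ≤ m → sN m ≤ sN n := by
    intro n m hnm
    apply one_div_le_one_div_of_le (by positivity)
    have : (n:ℝ) ≤ m := Nat.cast_le.mpr hnm
    linarith
  have hdist : ∀ n m N' : ℕ, N' ≤ n → N' ≤ m →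
      dist (y (sN n)) (y (sN m)) ≤ Real.sqrt (sN N') := by
    intro n m N' hn hm
    rw [dist_eq_norm, ← Unitization.norm_inr (𝕜 := ℂ), Unitization.inr_sub ℂ,
      h_yinr, h_yinr]
    calc ‖xt (sN n) - xt (sN m)‖ ≤ Real.sqrt (max (sN n) (sN m)) :=
          hI3 _ _ (hsNpos n) (hsNpos m)
      _ ≤ Real.sqrt (sN N') :=
          Real.sqrt_le_sqrt (max_le (hsNle N' n hn) (hsNle N' m hm))
  have hcauchy : CauchySeq (fun n => y (sN n)) := by
    apply cauchySeq_of_le_tendsto_0 (fun N' => Real.sqrt (sN N')) hdist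
    have : Filter.Tendsto (fun N' : ℕ => Real.sqrt (1/((N':ℝ)+1))) Filter.atTop (nhds 0) :=
      tendsto_one_div_sqrt
    simpa [hsN] using this
  obtain ⟨x, hx⟩ := cauchySeq_tendsto_of_complete hcauchy
  have hxnorm : ∀ n, ‖star (y (sN n)) * y (sN n) - e‖ ≤ sN n := by
    intro n
    rw [← Unitization.norm_inr (𝕜 := ℂ), Unitization.inr_sub ℂ, Unitization.inr_mul,
      Unitization.inr_star, h_yinr]
    exact hI2 (sN n) (hsNpos n)
  have hxe : star x * x = e := by
    have h1 : Filter.Tendsto (fun n => star (y (sN n)) * y (sN n)) Filter.atTop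
        (nhds (star x * x)) := hx.star.mul hx
    have h2 : Filter.Tendsto (fun n => star (y (sN n)) * y (sN n)) Filter.atTop (nhds e) := by
      apply tendsto_of_norm_sub_le _ hxnorm
      simpa [hsN, one_div] using tendsto_one_div_add_atTop_nhds_zero_nat (𝕜 := ℝ)
    exact tendsto_nhds_unique h1 h2
  have hxher : x * star x ∈ her b := by
    apply mul_star_mem_her b hb
    rw [← hsqb]
    exact mem_closure_of_tendsto hx (Filter.Eventually.of_forall fun n => ⟨g (sN n), rfl⟩)
  exact ⟨x, hxe.symm, hxher⟩

end ForwardMain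


/-- For positive `a, b` in a C*-algebra, `a ≾ b` if and only if for every `ε > 0` there is
`x ∈ A` with `(a − ε)₊ = x*x` and `xx* ∈ her(b)`. -/
theorem cuntzLE_iff_cutdown (a b : A) (ha : 0 ≤ a) (hb : 0 ≤ b) :
    CuntzLE a b ↔ ∀ ε : ℝ, 0 < ε → ∃ x : A,
      cfcₙ (fun t : ℝ => max (t - ε) 0) a = star x * x ∧ x * star x ∈ her b := by
  constructor
  · intro h ε hε
    exact cuntz_to_cutdown a b ha hb h ε hε
  · intro H
    exact cutdown_to_cuntz a b ha hb H
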